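/- For every real x ≥ 1, the function t ↦ ln_t(x) = (x^t − 1)/t is convex on (0, ∞). -/

import Mathlib

open Real Set

private lemma stmt13_key {u : ℝ} (hu : 0 ≤ u) : 2 ≤ Real.exp u * (u ^ 2 - 2 * u + 2) := by
  have hq : 1 + u + u ^ 2 / 2 ≤ Real.exp u := Real.quadratic_le_exp_of_nonneg hu
  have hpos : (0 : ℝ) ≤ u ^ 2 - 2 * u + 2 := by nlinarith [sq_nonneg (u - 1)]
  have h := mul_le_mul_of_nonneg_right hq hpos
  nlinarith [sq_nonneg (u ^ 2), h]

/-- For every real `x ≥ 1`, the function `t ↦ ln_t(x) = (xᵗ - 1)/t`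
is convex on `(0, ∞)`. -/
theorem stmt13 (x : ℝ) (hx : 1 ≤ x) :
    ConvexOn ℝ (Set.Ioi (0 : ℝ)) (fun t : ℝ => (x ^ t - 1) / t) := by
  have hx0 : (0 : ℝ) < x := lt_of_lt_of_le one_pos hx
  set a := Real.log x with ha_def
  have ha : 0 ≤ a := Real.log_nonneg hx
  have hfg : (fun t : ℝ => (x ^ t - 1) / t)
      = fun t : ℝ => (Real.exp (a * t) - 1) / t := by
    funext t; rw [Real.rpow_def_of_pos hx0]
  rw [hfg]
  set f : ℝ → ℝ := fun t => (Real.exp (a * t) - 1) / t with hf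
  set g : ℝ → ℝ := fun t =>
      (Real.exp (a * t) * a * t - (Real.exp (a * t) - 1) * 1) / t ^ 2 with hg
  have hE : ∀ t : ℝ, HasDerivAt (fun s => Real.exp (a * s)) (Real.exp (a * t) * a) t := by
    intro t
    simpa using ((hasDerivAt_id t).const_mul a).exp
  have hderiv : ∀ t ∈ Set.Ioi (0 : ℝ), HasDerivAt f (g t) t := by
    intro t ht
    have ht0 : t ≠ 0 := ne_of_gt ht
    exact (((hE t).sub_const 1).div (hasDerivAt_id t) ht0)
  have hderiv2 : ∀ t ∈ Set.Ioi (0 : ℝ), HasDerivAt g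
      ((a ^ 2 * t * Real.exp (a * t) * t ^ 2 -
        (Real.exp (a * t) * a * t - (Real.exp (a * t) - 1) * 1) * (2 * t)) / (t ^ 2) ^ 2) t := by
    intro t ht
    have ht0 : t ≠ 0 := ne_of_gt ht
    have hN : HasDerivAt (fun s => Real.exp (a * s) * a * s - (Real.exp (a * s) - 1) * 1)
        (a ^ 2 * t * Real.exp (a * t)) t := by
      have h1 : HasDerivAt (fun s => Real.exp (a * s) * a * s - (Real.exp (a * s) - 1) * 1) _ t := (((hE t).mul_const a).mul (hasDerivAt_id t)).sub (((hE t).sub_const 1).mul_const 1)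
      convert h1 using 1
      simp only [id_eq]
      ring
    have hD : HasDerivAt (fun s : ℝ => s ^ 2) (2 * t) t := by
      simpa using hasDerivAt_pow 2 t
    exact hN.div hD (pow_ne_zero 2 ht0)
  have heq : ∀ t ∈ Set.Ioi (0 : ℝ), deriv f =ᶠ[nhds t] g := by
    intro t ht
    filter_upwards [isOpen_Ioi.mem_nhds ht] with s hs
    exact (hderiv s hs).deriv
  have hderivf2 : ∀ t ∈ Set.Ioi (0 : ℝ), HasDerivAt (deriv f)
      ((a ^ 2 * t * Real.exp (a * t) * t ^ 2 -
        (Real.exp (a * t) * a * t - (Real.exp (a * t) - 1) * 1) * (2 * t)) / (t ^ 2) ^ 2) t := by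
    intro t ht
    exact (hderiv2 t ht).congr_of_eventuallyEq (heq t ht)
  apply convexOn_of_deriv2_nonneg (convex_Ioi 0)
  · exact fun t ht => ((hderiv t ht).differentiableAt.continuousAt).continuousWithinAt
  · rw [interior_Ioi]
    exact fun t ht => (hderiv t ht).differentiableAt.differentiableWithinAt
  · rw [interior_Ioi]
    exact fun t ht => (hderivf2 t ht).differentiableAt.differentiableWithinAt
  · rw [interior_Ioi]
    intro t ht
    have ht0 : 0 < t := ht
    have hval : deriv^[2] f t =
        (a ^ 2 * t * Real.exp (a * t) * t ^ 2 -
          (Real.exp (a * t) * a * t - (Real.exp (a * t) - 1) * 1) * (2 * t)) / (t ^ 2) ^ 2 := by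
      simp only [Function.iterate_succ, Function.iterate_zero, Function.comp_apply, id]
      exact (hderivf2 t ht).deriv
    rw [hval]
    have hu : 0 ≤ a * t := mul_nonneg ha ht0.le
    have hk := stmt13_key hu
    have hnum : 0 ≤ a ^ 2 * t * Real.exp (a * t) * t ^ 2 -
        (Real.exp (a * t) * a * t - (Real.exp (a * t) - 1) * 1) * (2 * t) := by
      nlinarith [hk, ht0, Real.exp_pos (a * t)]
    positivity
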